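/- Let A_1, …, A_M be real n×n matrices with A := A_1 Hurwitz, D_j := A_j − A_1, and C_1, …, C_M real p×n matrices. Define Q_1 as the unique symmetric positive semidefinite solution of Aᵀ·Q_1 + Q_1·A + ∑_{j=1}^{M} C_jᵀ·C_j = 0 and, for k ≥ 2, Q_k as the unique symmetric positive semidefinite solution of Aᵀ·Q_k + Q_k·A + ∑_{j=1}^{M} D_jᵀ·Q_{k−1}·D_j = 0. If the series ∑_{k≥1} Q_k is summable with sum Q, then the range of Q equals the observability subspace O, i.e. the span of all columns of matrices of the form M_sᵀ ⋯ M_1ᵀ · C_{i_0}ᵀ, where s ≥ 0, each M_t ∈ {A_1, …, A_M}, i_0 ∈ {1,…,M}, and the empty product is the identity matrix. -/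

import Mathlib

open Matrix

/-- A real square matrix is Hurwitz if every eigenvalue of it, viewed as a complex
matrix, has strictly negative real part. -/
def IsHurwitz {n : ℕ} (A : Matrix (Fin n) (Fin n) ℝ) : Prop :=
  ∀ μ ∈ spectrum ℂ (A.map (algebraMap ℝ ℂ)), μ.re < 0

open Polynomial


namespace GramianAux

variable {n m : ℕ}

/-- Orthogonal complement w.r.t. the dot product pairing. -/
def dperp (W : Submodule ℝ (Fin n → ℝ)) : Submodule ℝ (Fin n → ℝ) where
  carrier := {x | ∀ y ∈ W, y ⬝ᵥ x = 0}
  add_mem' := by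
    intro a b ha hb y hy
    rw [dotProduct_add, ha y hy, hb y hy, add_zero]
  zero_mem' := by
    intro y hy
    exact dotProduct_zero y
  smul_mem' := by
    intro c a ha y hy
    rw [dotProduct_smul, ha y hy, smul_zero]

lemma mem_dperp {W : Submodule ℝ (Fin n → ℝ)} {x : Fin n → ℝ} :
    x ∈ dperp W ↔ ∀ y ∈ W, y ⬝ᵥ x = 0 := Iff.rfl

lemma mulVec_dot (Mt : Matrix (Fin n) (Fin m) ℝ) (u : Fin m → ℝ) (x : Fin n → ℝ) :
    (Mt *ᵥ u) ⬝ᵥ x = u ⬝ᵥ (Mtᵀ *ᵥ x) := by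
  rw [dotProduct_comm, dotProduct_mulVec, ← Matrix.mulVec_transpose, dotProduct_comm]

lemma dperp_range (Mt : Matrix (Fin n) (Fin m) ℝ) :
    dperp (LinearMap.range Mt.mulVecLin) = LinearMap.ker Mtᵀ.mulVecLin := by
  ext x
  simp only [mem_dperp, LinearMap.mem_range, LinearMap.mem_ker, Matrix.mulVecLin_apply,
    forall_exists_index]
  constructor
  · intro h
    have h' : ∀ z : Fin m → ℝ, z ⬝ᵥ (Mtᵀ *ᵥ x) = 0 := by
      intro z
      have := h (Mt *ᵥ z) z rfl
      rwa [mulVec_dot] at this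
    have := h' (Mtᵀ *ᵥ x)
    rwa [dotProduct_comm, dotProduct_self_eq_zero] at this
  · rintro h y z rfl
    rw [mulVec_dot, h, dotProduct_zero]

lemma exists_matrix_range (W : Submodule ℝ (Fin n → ℝ)) :
    ∃ Mt : Matrix (Fin n) (Fin (Module.finrank ℝ W)) ℝ,
      LinearMap.range Mt.mulVecLin = W := by
  classical
  let b := Module.finBasis ℝ W
  refine ⟨Matrix.of fun i j => (b j : Fin n → ℝ) i, ?_⟩
  rw [Matrix.range_mulVecLin]
  have h : Set.range (Matrix.of fun i j => (b j : Fin n → ℝ) i).col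
      = W.subtype '' Set.range b := by
    ext v
    simp only [Set.mem_range, Set.mem_image, Submodule.coe_subtype]
    constructor
    · rintro ⟨j, rfl⟩; exact ⟨b j, ⟨j, rfl⟩, rfl⟩
    · rintro ⟨w, ⟨j, rfl⟩, rfl⟩; exact ⟨j, rfl⟩
  rw [h, ← Submodule.map_span, b.span_eq, Submodule.map_top, Submodule.range_subtype]

lemma finrank_dperp_add (W : Submodule ℝ (Fin n → ℝ)) :
    Module.finrank ℝ (dperp W) + Module.finrank ℝ W = n := by
  obtain ⟨Mt, hMt⟩ := exists_matrix_range W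
  have h1 : dperp W = LinearMap.ker Mtᵀ.mulVecLin := by
    have := dperp_range Mt
    rw [hMt] at this
    exact this
  have h2 := LinearMap.finrank_range_add_finrank_ker (Mtᵀ.mulVecLin)
  have h3 : Module.finrank ℝ (LinearMap.range Mtᵀ.mulVecLin) = Module.finrank ℝ W := by
    have hr : Mtᵀ.rank = Mt.rank := Matrix.rank_transpose Mt
    rw [Matrix.rank, Matrix.rank, hMt] at hr
    exact hr
  rw [Module.finrank_pi ℝ, Fintype.card_fin] at h2
  rw [h1]
  omega

lemma le_dperp_dperp (W : Submodule ℝ (Fin n → ℝ)) : W ≤ dperp (dperp W) := by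
  intro x hx y hy
  rw [dotProduct_comm]
  exact hy x hx

lemma dperp_dperp (W : Submodule ℝ (Fin n → ℝ)) : dperp (dperp W) = W := by
  have h1 := finrank_dperp_add W
  have h2 := finrank_dperp_add (dperp W)
  have hle : Module.finrank ℝ (dperp (dperp W)) ≤ Module.finrank ℝ W := by omega
  exact (Submodule.eq_of_le_of_finrank_le (le_dperp_dperp W) hle).symm

lemma range_eq_dperp_ker {Mt : Matrix (Fin n) (Fin n) ℝ} (h : Mtᵀ = Mt) :
    LinearMap.range Mt.mulVecLin = dperp (LinearMap.ker Mt.mulVecLin) := by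
  have := dperp_range Mtᵀ
  rw [Matrix.transpose_transpose, h] at this
  rw [← this, dperp_dperp]

section Sylvester

lemma spectrum_transpose {m : ℕ} (B : Matrix (Fin m) (Fin m) ℂ) :
    spectrum ℂ Bᵀ = spectrum ℂ B := by
  ext μ
  rw [spectrum.mem_iff, spectrum.mem_iff]
  have h : algebraMap ℂ (Matrix (Fin m) (Fin m) ℂ) μ - Bᵀ
      = (algebraMap ℂ (Matrix (Fin m) (Fin m) ℂ) μ - B)ᵀ := by
    simp [Algebra.algebraMap_eq_smul_one, Matrix.transpose_sub, Matrix.transpose_smul]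
  rw [h, Matrix.isUnit_iff_isUnit_det, Matrix.det_transpose, ← Matrix.isUnit_iff_isUnit_det]

lemma eval_charpoly {m : ℕ} (N : Matrix (Fin m) (Fin m) ℂ) (μ : ℂ) :
    (N.charpoly).eval μ = (Matrix.diagonal (fun _ => μ) - N).det := by
  rw [Matrix.charpoly, ← Polynomial.coe_evalRingHom, RingHom.map_det]
  congr 1
  ext i j
  by_cases h : i = j
  · subst h
    simp [Matrix.charmatrix_apply_eq]
  · simp [Matrix.charmatrix_apply_ne _ _ _ h, Matrix.diagonal_apply_ne _ h]

lemma sylvester_zero {m : ℕ} (B : Matrix (Fin m) (Fin m) ℂ)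
    (hB : ∀ μ ∈ spectrum ℂ B, μ.re < 0)
    (X : Matrix (Fin m) (Fin m) ℂ) (hX : Bᵀ * X + X * B = 0) : X = 0 := by
  rcases Nat.eq_zero_or_pos m with hm | hm
  · subst hm
    ext i j
    exact absurd i.2 (by omega)
  have hBX : Bᵀ * X = X * (-B) := by
    rw [Matrix.mul_neg, eq_neg_iff_add_eq_zero]
    exact hX
  have hpow : ∀ k : ℕ, Bᵀ ^ k * X = X * (-B) ^ k := by
    intro k
    induction k with
    | zero => simp
    | succ k ih =>
      rw [pow_succ', mul_assoc, ih, ← mul_assoc, hBX, mul_assoc, ← pow_succ']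
  have hpoly : ∀ q : ℂ[X], (aeval Bᵀ q) * X = X * (aeval (-B) q) := by
    intro q
    induction q using Polynomial.induction_on' with
    | add a b ha hb => rw [map_add, map_add, add_mul, mul_add, ha, hb]
    | monomial k c =>
      rw [aeval_monomial, aeval_monomial]
      simp only [Algebra.algebraMap_eq_smul_one, smul_mul_assoc, one_mul, mul_smul_comm]
      rw [hpow]
  set q : ℂ[X] := (-B).charpoly with hq
  have h0 : (aeval Bᵀ q) * X = 0 := by
    rw [hpoly, Matrix.aeval_self_charpoly, mul_zero]
  have hunit : IsUnit (aeval Bᵀ q) := by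
    rw [← spectrum.zero_notMem_iff (R := ℂ)]
    rw [spectrum.map_polynomial_aeval_of_degree_pos Bᵀ q
      (by rw [hq, Matrix.charpoly_degree_eq_dim]; simpa using hm)]
    rintro ⟨μ, hμ, hev⟩
    rw [spectrum_transpose] at hμ
    have h1 : (Matrix.diagonal (fun _ => μ) - (-B)).det = 0 := by
      rw [← eval_charpoly]; exact hev
    have h2 : (-μ) ∈ spectrum ℂ B := by
      rw [spectrum.mem_iff, Matrix.isUnit_iff_isUnit_det, isUnit_iff_ne_zero, ne_eq,
        not_not]
      have : algebraMap ℂ (Matrix (Fin m) (Fin m) ℂ) (-μ) - B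
          = -(Matrix.diagonal (fun _ => μ) - (-B)) := by
        rw [Algebra.algebraMap_eq_smul_one]
        ext i j
        by_cases h : i = j
        · subst h
          simp [Matrix.one_apply]
          ring
        · simp [Matrix.diagonal_apply_ne _ h, Matrix.one_apply_ne h, h]
      rw [this, Matrix.det_neg, h1, mul_zero]
    have := hB _ hμ
    have := hB _ h2
    simp only [Complex.neg_re] at this
    linarith
  exact hunit.mul_left_cancel (by rw [h0, mul_zero])

end Sylvester

lemma sum_mulVec {a b : ℕ} {ι : Type*} (s : Finset ι) (f : ι → Matrix (Fin a) (Fin b) ℝ)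
    (x : Fin b → ℝ) : (∑ i ∈ s, f i) *ᵥ x = ∑ i ∈ s, f i *ᵥ x := by
  classical
  induction s using Finset.cons_induction with
  | empty => simp [Matrix.zero_mulVec]
  | cons i s hi ih => rw [Finset.sum_cons, Finset.sum_cons, Matrix.add_mulVec, ih]

lemma mem_spectrum_iff_eigen {k : ℕ} (B : Matrix (Fin k) (Fin k) ℂ) (μ : ℂ) :
    μ ∈ spectrum ℂ B ↔ ∃ v : Fin k → ℂ, v ≠ 0 ∧ B *ᵥ v = μ • v := by
  classical
  rw [spectrum.mem_iff, Matrix.isUnit_iff_isUnit_det, isUnit_iff_ne_zero, ne_eq, not_not,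
    ← Matrix.exists_mulVec_eq_zero_iff]
  constructor
  · rintro ⟨v, hv, hv0⟩
    refine ⟨v, hv, ?_⟩
    rw [Matrix.sub_mulVec, Algebra.algebraMap_eq_smul_one, Matrix.smul_mulVec,
      Matrix.one_mulVec, sub_eq_zero] at hv0
    exact hv0.symm
  · rintro ⟨v, hv, hv0⟩
    refine ⟨v, hv, ?_⟩
    rw [Matrix.sub_mulVec, Algebra.algebraMap_eq_smul_one, Matrix.smul_mulVec,
      Matrix.one_mulVec, hv0, sub_self]

lemma lyap_subspace {A0 Qm R : Matrix (Fin n) (Fin n) ℝ}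
    (hA : ∀ μ ∈ spectrum ℂ (A0.map (algebraMap ℝ ℂ)), μ.re < 0)
    (hQ : Qm.PosSemidef)
    (heq : A0ᵀ * Qm + Qm * A0 + R = 0)
    (W : Submodule ℝ (Fin n → ℝ))
    (hAW : ∀ x ∈ W, A0 *ᵥ x ∈ W)
    (hRW : ∀ x ∈ W, R *ᵥ x = 0) :
    ∀ x ∈ W, Qm *ᵥ x = 0 := by
  classical
  let b : Module.Basis (Fin (Module.finrank ℝ W)) ℝ W := Module.finBasis ℝ W
  set V : Matrix (Fin n) (Fin (Module.finrank ℝ W)) ℝ :=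
    Matrix.of (fun i j => (b j : Fin n → ℝ) i) with hVdef
  have hVc : ∀ c, V *ᵥ c = ((∑ j, c j • b j : W) : Fin n → ℝ) := by
    intro c
    ext i
    simp [hVdef, Matrix.mulVec, dotProduct, mul_comm]
  have hVinj : ∀ c, V *ᵥ c = 0 → c = 0 := by
    intro c hc
    rw [hVc] at hc
    have h0 : (∑ j, c j • b j : W) = 0 := by
      exact_mod_cast Subtype.ext hc
    exact funext fun j => Fintype.linearIndependent_iff.mp b.linearIndependent c h0 j
  -- the restricted endomorphism
  have hAW' : ∀ x ∈ W, A0.mulVecLin x ∈ W := by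
    intro x hx
    simpa using hAW x hx
  set f : W →ₗ[ℝ] W := (A0.mulVecLin).restrict hAW' with hfdef
  set A' := LinearMap.toMatrix b b f with hA'def
  have hfb : ∀ j, (f (b j) : Fin n → ℝ) = A0 *ᵥ (b j : Fin n → ℝ) := by
    intro j
    simp [hfdef, LinearMap.restrict_apply]
  have hAV : A0 * V = V * A' := by
    ext i j
    have h1 : (A0 * V) i j = (A0 *ᵥ (b j : Fin n → ℝ)) i := by
      simp [Matrix.mul_apply, Matrix.mulVec, dotProduct, hVdef]
    have h2 : (V * A') i j = (V *ᵥ (fun k => A' k j)) i := by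
      simp [Matrix.mul_apply, Matrix.mulVec, dotProduct]
    rw [h1, h2, hVc]
    have h3 : (∑ k, A' k j • b k : W) = f (b j) := by
      rw [hA'def]
      conv_rhs => rw [← Module.Basis.sum_repr b (f (b j))]
      refine Finset.sum_congr rfl fun k _ => ?_
      rw [LinearMap.toMatrix_apply]
    rw [h3, hfb]
  set Q' : Matrix (Fin (Module.finrank ℝ W)) (Fin (Module.finrank ℝ W)) ℝ :=
    Vᵀ * Qm * V with hQ'def
  have hRV : R * V = 0 := by
    ext i j
    have : (R *ᵥ (b j : Fin n → ℝ)) i = 0 := by rw [hRW _ (b j).2]; rfl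
    simpa [Matrix.mul_apply, Matrix.mulVec, dotProduct, hVdef] using this
  have hsum : A0ᵀ * Qm + Qm * A0 = -R := eq_neg_of_add_eq_zero_left heq
  have hQ'eq : A'ᵀ * Q' + Q' * A' = 0 := by
    have e1 : A'ᵀ * Q' = Vᵀ * (A0ᵀ * (Qm * V)) := by
      rw [hQ'def, Matrix.mul_assoc Vᵀ Qm V, ← Matrix.mul_assoc A'ᵀ Vᵀ (Qm * V),
        ← Matrix.transpose_mul, ← hAV, Matrix.transpose_mul, Matrix.mul_assoc]
    have e2 : Q' * A' = Vᵀ * (Qm * (A0 * V)) := by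
      rw [hQ'def, Matrix.mul_assoc (Vᵀ * Qm) V A', ← hAV, Matrix.mul_assoc]
    rw [e1, e2, ← Matrix.mul_add]
    have e3 : A0ᵀ * (Qm * V) + Qm * (A0 * V) = (A0ᵀ * Qm + Qm * A0) * V := by
      rw [Matrix.add_mul, Matrix.mul_assoc, Matrix.mul_assoc]
    rw [e3, hsum, Matrix.neg_mul, hRV, neg_zero, Matrix.mul_zero]
  -- complexify
  set toC := algebraMap ℝ ℂ with htoC
  have hA' : ∀ μ ∈ spectrum ℂ (A'.map toC), μ.re < 0 := by
    intro μ hμ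
    obtain ⟨v, hv, hv0⟩ := (mem_spectrum_iff_eigen _ μ).mp hμ
    have hw : (A0.map toC) *ᵥ (V.map toC *ᵥ v) = μ • (V.map toC *ᵥ v) := by
      rw [Matrix.mulVec_mulVec, ← Matrix.map_mul, hAV, Matrix.map_mul,
        ← Matrix.mulVec_mulVec, hv0, Matrix.mulVec_smul]
    have hwne : V.map toC *ᵥ v ≠ 0 := by
      intro h0
      apply hv
      have hre : V *ᵥ (fun j => (v j).re) = 0 := by
        ext i
        have := congrFun h0 i
        simp only [Matrix.mulVec, dotProduct, Matrix.map_apply, Pi.zero_apply] at this ⊢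
        have := congrArg Complex.re this
        simpa [htoC, Complex.re_sum] using this
      have him : V *ᵥ (fun j => (v j).im) = 0 := by
        ext i
        have := congrFun h0 i
        simp only [Matrix.mulVec, dotProduct, Matrix.map_apply, Pi.zero_apply] at this ⊢
        have := congrArg Complex.im this
        simpa [htoC, Complex.im_sum] using this
      have hre0 := hVinj _ hre
      have him0 := hVinj _ him
      funext j
      apply Complex.ext
      · simpa using congrFun hre0 j
      · simpa using congrFun him0 j
    exact hA μ ((mem_spectrum_iff_eigen _ μ).mpr ⟨_, hwne, hw⟩)
  have hQ'C : (A'.map toC)ᵀ * (Q'.map toC) + (Q'.map toC) * (A'.map toC) = 0 := by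
    have h := congrArg toC.mapMatrix hQ'eq
    simp only [map_add, _root_.map_mul, map_zero, RingHom.mapMatrix_apply,
      Matrix.map_mul] at h
    simpa only [Matrix.transpose_map] using h
  have hQ'0 : Q' = 0 := by
    have := sylvester_zero (A'.map toC) hA' (Q'.map toC) hQ'C
    ext i j
    have h := congrFun (congrFun this i) j
    simpa [htoC, Complex.ofReal_eq_zero] using h
  -- conclude
  intro x hx
  have hxV : V *ᵥ (b.repr ⟨x, hx⟩) = x := by
    rw [hVc]
    exact_mod_cast congrArg _ (Module.Basis.sum_repr b ⟨x, hx⟩)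
  have hdot : x ⬝ᵥ (Qm *ᵥ x) = 0 := by
    rw [← hxV, Matrix.mulVec_mulVec, mulVec_dot, Matrix.mulVec_mulVec, ← Matrix.mul_assoc,
      ← hQ'def, hQ'0, Matrix.zero_mulVec, dotProduct_zero]
  have := (hQ.dotProduct_mulVec_zero_iff x).mp (by simpa using hdot)
  exact this

lemma herm_transpose {a : ℕ} {Mt : Matrix (Fin a) (Fin a) ℝ} (h : Mt.IsHermitian) :
    Mtᵀ = Mt := by
  ext i j
  calc Mtᵀ i j = Mtᴴ i j := by simp [Matrix.conjTranspose_apply]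
  _ = Mt i j := by rw [h]

lemma dot_conj {a : ℕ} (G : Matrix (Fin a) (Fin n) ℝ) (P : Matrix (Fin a) (Fin a) ℝ)
    (x : Fin n → ℝ) :
    x ⬝ᵥ ((Gᵀ * P * G) *ᵥ x) = (G *ᵥ x) ⬝ᵥ (P *ᵥ (G *ᵥ x)) := by
  rw [Matrix.mul_assoc, ← Matrix.mulVec_mulVec, ← Matrix.mulVec_mulVec, dotProduct_comm,
    mulVec_dot, Matrix.transpose_transpose, dotProduct_comm]

lemma dot_gram {a : ℕ} (G : Matrix (Fin a) (Fin n) ℝ) (x : Fin n → ℝ) :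
    x ⬝ᵥ ((Gᵀ * G) *ᵥ x) = (G *ᵥ x) ⬝ᵥ (G *ᵥ x) := by
  rw [← Matrix.mulVec_mulVec, dotProduct_comm, mulVec_dot, Matrix.transpose_transpose]

/-- The linear functional `y ↦ y ⬝ᵥ x`. -/
def dotLin (x : Fin n → ℝ) : (Fin n → ℝ) →ₗ[ℝ] ℝ where
  toFun y := y ⬝ᵥ x
  map_add' a bb := add_dotProduct a bb x
  map_smul' c a := smul_dotProduct c a x

lemma dot_sum {a : ℕ} {ι : Type*} (s : Finset ι) (x : Fin a → ℝ) (v : ι → Fin a → ℝ) :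
    x ⬝ᵥ (∑ i ∈ s, v i) = ∑ i ∈ s, x ⬝ᵥ v i := by
  classical
  induction s using Finset.cons_induction with
  | empty => simp
  | cons i s hi ih => rw [Finset.sum_cons, Finset.sum_cons, dotProduct_add, ih]

lemma dot_self_nonneg {a : ℕ} (v : Fin a → ℝ) : 0 ≤ v ⬝ᵥ v :=
  Finset.sum_nonneg fun k _ => mul_self_nonneg (v k)

end GramianAux

open GramianAux

theorem range_observability_gramian_eq_observability_subspace
    {n p M : ℕ} (hM : 0 < M)
    (A : Fin M → Matrix (Fin n) (Fin n) ℝ)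
    (C : Fin M → Matrix (Fin p) (Fin n) ℝ)
    (hA : IsHurwitz (A ⟨0, hM⟩))
    (D : Fin M → Matrix (Fin n) (Fin n) ℝ)
    (hD : ∀ j, D j = A j - A ⟨0, hM⟩)
    (Q : ℕ → Matrix (Fin n) (Fin n) ℝ)
    -- `Q 0` plays the role of `Q₁`, etc.
    (hQ1psd : (Q 0).PosSemidef)
    (hQ1 : (A ⟨0, hM⟩)ᵀ * Q 0 + Q 0 * A ⟨0, hM⟩ + ∑ j : Fin M, (C j)ᵀ * C j = 0)
    (hQkpsd : ∀ k : ℕ, (Q (k + 1)).PosSemidef)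
    (hQk : ∀ k : ℕ,
      (A ⟨0, hM⟩)ᵀ * Q (k + 1) + Q (k + 1) * A ⟨0, hM⟩ +
        ∑ j : Fin M, (D j)ᵀ * Q k * D j = 0)
    (S : Matrix (Fin n) (Fin n) ℝ) (hS : HasSum Q S)
    -- the observability subspace
    (O : Submodule ℝ (Fin n → ℝ))
    (hO : O = ⨆ (L : List (Matrix (Fin n) (Fin n) ℝ))
        (_ : ∀ X ∈ L, X ∈ Set.range A) (i : Fin M),
        LinearMap.range (((L.map Matrix.transpose).prod * (C i)ᵀ).mulVecLin)) :
    LinearMap.range S.mulVecLin = O := by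
  classical
  set A0 := A ⟨0, hM⟩ with hA0
  have hA' : ∀ μ ∈ spectrum ℂ (A0.map (algebraMap ℝ ℂ)), μ.re < 0 := hA
  have Qpsd : ∀ k, (Q k).PosSemidef := by
    intro k
    cases k with
    | zero => exact hQ1psd
    | succ k => exact hQkpsd k
  set R : ℕ → Matrix (Fin n) (Fin n) ℝ := fun k =>
    match k with
    | 0 => ∑ j : Fin M, (C j)ᵀ * C j
    | (k + 1) => ∑ j : Fin M, (D j)ᵀ * Q k * D j with hR
  have hEq : ∀ k, A0ᵀ * Q k + Q k * A0 + R k = 0 := by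
    intro k
    cases k with
    | zero => exact hQ1
    | succ k => exact hQk k
  have Qsym : ∀ k, (Q k)ᵀ = Q k := fun k => herm_transpose (Qpsd k).1
  have hEntry : ∀ i j, HasSum (fun k => Q k i j) (S i j) := by
    intro i j
    exact (Pi.hasSum.mp ((Pi.hasSum.mp hS) i)) j
  have hvec : ∀ x : Fin n → ℝ, HasSum (fun k => Q k *ᵥ x) (S *ᵥ x) := by
    intro x
    rw [Pi.hasSum]
    intro i
    exact hasSum_sum (s := Finset.univ) (f := fun j (k : ℕ) => Q k i j * x j)
      (a := fun j => S i j * x j) (fun j _ => (hEntry i j).mul_right (x j))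
  have hquad : ∀ x : Fin n → ℝ, HasSum (fun k => x ⬝ᵥ (Q k *ᵥ x)) (x ⬝ᵥ (S *ᵥ x)) := by
    intro x
    exact hasSum_sum (s := Finset.univ) (f := fun i (k : ℕ) => x i * (Q k *ᵥ x) i)
      (a := fun i => x i * (S *ᵥ x) i)
      (fun i _ => ((Pi.hasSum.mp (hvec x)) i).mul_left (x i))
  have hquadnn : ∀ k x, 0 ≤ x ⬝ᵥ (Q k *ᵥ x) := by
    intro k x
    simpa using (Qpsd k).dotProduct_mulVec_nonneg x
  have hquad_zero : ∀ k x, x ⬝ᵥ (Q k *ᵥ x) = 0 → Q k *ᵥ x = 0 := by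
    intro k x hx
    exact ((Qpsd k).dotProduct_mulVec_zero_iff x).mp (by simpa using hx)
  have hkerS : ∀ x : Fin n → ℝ, S *ᵥ x = 0 → ∀ k, Q k *ᵥ x = 0 := by
    intro x hx k
    have hq := hquad x
    rw [hx, dotProduct_zero] at hq
    have hle : x ⬝ᵥ (Q k *ᵥ x) ≤ 0 := le_hasSum hq k (fun j _ => hquadnn j x)
    exact hquad_zero k x (le_antisymm hle (hquadnn k x))
  have hSx : ∀ x : Fin n → ℝ, (∀ k, Q k *ᵥ x = 0) → S *ᵥ x = 0 := by
    intro x hx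
    have h := hvec x
    simp only [hx] at h
    exact h.unique hasSum_zero
  have hRquad : ∀ k x, Q k *ᵥ x = 0 → x ⬝ᵥ (R k *ᵥ x) = 0 := by
    intro k x hx
    have h := congrArg (fun Mt : Matrix (Fin n) (Fin n) ℝ => x ⬝ᵥ (Mt *ᵥ x)) (hEq k)
    simp only [Matrix.add_mulVec, dotProduct_add, Matrix.zero_mulVec, dotProduct_zero] at h
    have h1 : x ⬝ᵥ ((A0ᵀ * Q k) *ᵥ x) = 0 := by
      rw [← Matrix.mulVec_mulVec, hx, Matrix.mulVec_zero, dotProduct_zero]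
    have h2 : x ⬝ᵥ ((Q k * A0) *ᵥ x) = 0 := by
      rw [← Matrix.mulVec_mulVec, dotProduct_comm, mulVec_dot, Qsym, hx, dotProduct_zero]
    rw [h1, h2, zero_add, zero_add] at h
    exact h
  have hKC : ∀ x, (∀ k, Q k *ᵥ x = 0) → ∀ i, C i *ᵥ x = 0 := by
    intro x hx i
    have h0 := hRquad 0 x (hx 0)
    have hexp : x ⬝ᵥ (R 0 *ᵥ x) = ∑ j : Fin M, (C j *ᵥ x) ⬝ᵥ (C j *ᵥ x) := by
      show x ⬝ᵥ ((∑ j : Fin M, (C j)ᵀ * C j) *ᵥ x) = _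
      rw [GramianAux.sum_mulVec, dot_sum]
      exact Finset.sum_congr rfl fun j _ => dot_gram (C j) x
    rw [hexp] at h0
    have hz := (Finset.sum_eq_zero_iff_of_nonneg
      (fun j _ => dot_self_nonneg (C j *ᵥ x))).mp h0 i (Finset.mem_univ i)
    exact dotProduct_self_eq_zero.mp hz
  have hKD : ∀ x, (∀ k, Q k *ᵥ x = 0) → ∀ j k, Q k *ᵥ (D j *ᵥ x) = 0 := by
    intro x hx j k
    have h0 := hRquad (k+1) x (hx (k+1))
    have hexp : x ⬝ᵥ (R (k+1) *ᵥ x)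
        = ∑ j' : Fin M, (D j' *ᵥ x) ⬝ᵥ (Q k *ᵥ (D j' *ᵥ x)) := by
      show x ⬝ᵥ ((∑ j' : Fin M, (D j')ᵀ * Q k * D j') *ᵥ x) = _
      rw [GramianAux.sum_mulVec, dot_sum]
      exact Finset.sum_congr rfl fun j' _ => dot_conj (D j') (Q k) x
    rw [hexp] at h0
    have hz := (Finset.sum_eq_zero_iff_of_nonneg
      (fun j' _ => hquadnn k (D j' *ᵥ x))).mp h0 j (Finset.mem_univ j)
    exact hquad_zero k _ hz
  have hRx : ∀ x, (∀ k, Q k *ᵥ x = 0) → ∀ k, R k *ᵥ x = 0 := by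
    intro x hx k
    cases k with
    | zero =>
      show (∑ j : Fin M, (C j)ᵀ * C j) *ᵥ x = 0
      rw [GramianAux.sum_mulVec]
      refine Finset.sum_eq_zero fun j _ => ?_
      rw [← Matrix.mulVec_mulVec, hKC x hx j, Matrix.mulVec_zero]
    | succ k =>
      show (∑ j : Fin M, (D j)ᵀ * Q k * D j) *ᵥ x = 0
      rw [GramianAux.sum_mulVec]
      refine Finset.sum_eq_zero fun j _ => ?_
      rw [Matrix.mul_assoc, ← Matrix.mulVec_mulVec, ← Matrix.mulVec_mulVec, hKD x hx j k,
        Matrix.mulVec_zero]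
  have hKA : ∀ x, (∀ k, Q k *ᵥ x = 0) → ∀ j k, Q k *ᵥ (A j *ᵥ x) = 0 := by
    intro x hx j k
    have h0 : Q k *ᵥ (A0 *ᵥ x) = 0 := by
      have h := congrArg (fun Mt : Matrix (Fin n) (Fin n) ℝ => Mt *ᵥ x) (hEq k)
      simp only [Matrix.add_mulVec, Matrix.zero_mulVec] at h
      rw [← Matrix.mulVec_mulVec, ← Matrix.mulVec_mulVec, hx k, Matrix.mulVec_zero,
        hRx x hx k, zero_add, add_zero] at h
      exact h
    have hDj : Q k *ᵥ (D j *ᵥ x) = 0 := hKD x hx j k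
    have hAj : A j *ᵥ x = A0 *ᵥ x + D j *ᵥ x := by
      rw [hD j, Matrix.sub_mulVec]
      abel
    rw [hAj, Matrix.mulVec_add, h0, hDj, add_zero]
  -- observability subspace facts
  have hCO : ∀ i (u : Fin p → ℝ), (C i)ᵀ *ᵥ u ∈ O := by
    intro i u
    rw [hO]
    refine Submodule.mem_iSup_of_mem ([] : List (Matrix (Fin n) (Fin n) ℝ)) ?_
    refine Submodule.mem_iSup_of_mem (by simp) ?_
    refine Submodule.mem_iSup_of_mem i ?_
    exact ⟨u, by simp [Matrix.mulVec_transpose]⟩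
  have hAO : ∀ j, ∀ y ∈ O, (A j)ᵀ *ᵥ y ∈ O := by
    intro j y hy
    have hle : O ≤ Submodule.comap ((A j)ᵀ).mulVecLin O := by
      conv_lhs => rw [hO]
      refine iSup_le fun L => iSup_le fun hL => iSup_le fun i => ?_
      rintro z ⟨u, rfl⟩
      simp only [Submodule.mem_comap, Matrix.mulVecLin_apply]
      have heq2 : (A j)ᵀ *ᵥ (((L.map Matrix.transpose).prod * (C i)ᵀ) *ᵥ u)
          = ((((A j :: L).map Matrix.transpose).prod * (C i)ᵀ)) *ᵥ u := by
        rw [Matrix.mulVec_mulVec, List.map_cons, List.prod_cons, Matrix.mul_assoc]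
      rw [heq2, hO]
      refine Submodule.mem_iSup_of_mem (A j :: L) ?_
      refine Submodule.mem_iSup_of_mem ?_ ?_
      · intro X hX
        rcases List.mem_cons.mp hX with h | h
        · exact ⟨j, h.symm⟩
        · exact hL X h
      exact Submodule.mem_iSup_of_mem i ⟨u, rfl⟩
    exact hle hy
  have hword : ∀ (L : List (Matrix (Fin n) (Fin n) ℝ)), (∀ X ∈ L, X ∈ Set.range A) →
      ∀ x, (∀ k, Q k *ᵥ x = 0) → ∀ (i : Fin M) (u : Fin p → ℝ),
      (((L.map Matrix.transpose).prod * (C i)ᵀ) *ᵥ u) ⬝ᵥ x = 0 := by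
    intro L
    induction L with
    | nil =>
      intro _ x hx i u
      simp only [List.map_nil, List.prod_nil, Matrix.one_mul]
      rw [mulVec_dot, Matrix.transpose_transpose, hKC x hx i, dotProduct_zero]
    | cons X L ih =>
      intro hL x hx i u
      obtain ⟨j, hj⟩ := hL X List.mem_cons_self
      simp only [List.map_cons, List.prod_cons]
      rw [Matrix.mul_assoc, ← Matrix.mulVec_mulVec, mulVec_dot, Matrix.transpose_transpose,
        ← hj]
      exact ih (fun X' hX' => hL X' (List.mem_cons_of_mem _ hX')) (A j *ᵥ x)
        (fun k => hKA x hx j k) i u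
  -- dperp O is contained in all kernels
  have hWinvA : ∀ j, ∀ x ∈ dperp O, A j *ᵥ x ∈ dperp O := by
    intro j x hx y hy
    rw [dotProduct_comm, mulVec_dot, dotProduct_comm]
    exact hx _ (hAO j y hy)
  have hWC : ∀ i, ∀ x ∈ dperp O, C i *ᵥ x = 0 := by
    intro i x hx
    rw [← dotProduct_self_eq_zero, mulVec_dot, dotProduct_comm]
    exact hx _ (hCO i (C i *ᵥ x))
  have hkerQ : ∀ k, ∀ x ∈ dperp O, Q k *ᵥ x = 0 := by
    intro k
    induction k with
    | zero =>
      refine lyap_subspace hA' hQ1psd hQ1 (dperp O) (fun x hx => hWinvA ⟨0, hM⟩ x hx) ?_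
      intro x hx
      rw [GramianAux.sum_mulVec]
      exact Finset.sum_eq_zero fun j _ => by
        rw [← Matrix.mulVec_mulVec, hWC j x hx, Matrix.mulVec_zero]
    | succ k ih =>
      refine lyap_subspace hA' (hQkpsd k) (hQk k) (dperp O) (fun x hx => hWinvA ⟨0, hM⟩ x hx) ?_
      intro x hx
      rw [GramianAux.sum_mulVec]
      refine Finset.sum_eq_zero fun j _ => ?_
      have hDx : D j *ᵥ x ∈ dperp O := by
        rw [hD j, Matrix.sub_mulVec]
        exact Submodule.sub_mem _ (hWinvA j x hx) (hWinvA ⟨0, hM⟩ x hx)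
      rw [Matrix.mul_assoc, ← Matrix.mulVec_mulVec, ← Matrix.mulVec_mulVec, ih _ hDx,
        Matrix.mulVec_zero]
  have hkerdperp : LinearMap.ker S.mulVecLin = dperp O := by
    ext x
    simp only [LinearMap.mem_ker, Matrix.mulVecLin_apply, mem_dperp]
    constructor
    · intro hx y hy
      have hxK := hkerS x hx
      have hle : O ≤ LinearMap.ker (dotLin x) := by
        rw [hO]
        refine iSup_le fun L => iSup_le fun hL => iSup_le fun i => ?_
        rintro z ⟨u, rfl⟩
        exact hword L hL x hxK i u
      exact hle hy
    · intro hx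
      exact hSx x (fun k => hkerQ k x hx)
  have hST : Sᵀ = S := by
    have htrans : HasSum (fun k => (Q k)ᵀ) Sᵀ := by
      apply Pi.hasSum.mpr
      intro i
      apply Pi.hasSum.mpr
      intro j
      exact hEntry j i
    have h2 : HasSum Q Sᵀ := by
      have hfun : (fun k => (Q k)ᵀ) = Q := funext Qsym
      rwa [hfun] at htrans
    exact h2.unique hS
  rw [range_eq_dperp_ker hST, hkerdperp, dperp_dperp]
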